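/- For every integer n ≥ 3, sin(π/n)/(1 - cos(π/n)) < ∑_{j=1}^{n-1} 1/sin(π j/n). -/

import Mathlib

open Real Finset

theorem sin_div_one_sub_cos_lt_sum_inv_sin (n : ℕ) (hn : 3 ≤ n) :
    Real.sin (π / n) / (1 - Real.cos (π / n)) <
      ∑ j ∈ Finset.Icc 1 (n - 1), 1 / Real.sin (π * j / n) := by
  have hn0 : (0:ℝ) < n := by positivity
  have hnn : (n:ℝ) ≠ 0 := ne_of_gt hn0
  set θ : ℝ := π / n with hθ
  have hθpos : 0 < θ := by positivity
  have hθlt : θ < π / 2 := by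
    rw [hθ, div_lt_div_iff₀ hn0 two_pos]
    have : (3:ℝ) ≤ n := by exact_mod_cast hn
    nlinarith [Real.pi_pos]
  have hsθ : 0 < Real.sin θ :=
    Real.sin_pos_of_pos_of_lt_pi hθpos (hθlt.trans (by nlinarith [Real.pi_pos]))
  have hsθ1 : Real.sin θ < 1 := by
    have hc : 0 < Real.cos θ := Real.cos_pos_of_mem_Ioo ⟨by linarith, hθlt⟩
    nlinarith [Real.sin_sq_add_cos_sq θ]
  have hcθ : 0 < 1 - Real.cos θ := by
    nlinarith [Real.sin_sq_add_cos_sq θ]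
  -- positivity of sin (π j / n) for j in Icc 1 (n-1)
  have hsin : ∀ j ∈ Finset.Icc 1 (n - 1), 0 < Real.sin (π * j / n) := by
    intro j hj
    simp only [Finset.mem_Icc] at hj
    apply Real.sin_pos_of_pos_of_lt_pi
    · have : (1:ℝ) ≤ j := by exact_mod_cast hj.1
      have := Real.pi_pos
      positivity
    · rw [div_lt_iff₀ hn0]
      have hjn : (j:ℝ) < n := by
        have : j < n := lt_of_le_of_lt hj.2 (by omega)
        exact_mod_cast this
      nlinarith [Real.pi_pos]
  -- telescoping identity: ∑ sin (j θ) * (1 - cos θ) = sin θ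
  have key : ∑ j ∈ Finset.Icc 1 (n - 1), Real.sin (π * j / n) * (1 - Real.cos θ)
      = Real.sin θ := by
    have hmap : Finset.Icc 1 (n - 1) = Finset.Ico 1 n := by
      ext x
      simp only [Finset.mem_Icc, Finset.mem_Ico]
      omega
    rw [hmap, Finset.sum_Ico_eq_sum_range]
    set f : ℕ → ℝ := fun k => (Real.sin ((k+1) * θ) - Real.sin ((k:ℝ) * θ)) / 2 with hf
    have hterm : ∀ k : ℕ, Real.sin (π * (↑(1 + k)) / n) * (1 - Real.cos θ) = f k - f (k+1) := by
      intro k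
      simp only [hf]
      push_cast
      have h1 : π * (1 + (k:ℝ)) / n = ((k:ℝ)+1) * θ := by rw [hθ]; ring
      have e1 : ((k:ℝ) + 1 + 1) * θ = ((k:ℝ)+1) * θ + θ := by ring
      have e2 : (k:ℝ) * θ = ((k:ℝ)+1) * θ - θ := by ring
      rw [h1, e1, e2, Real.sin_add, Real.sin_sub]
      ring
    rw [Finset.sum_congr rfl (fun k _ => hterm k), Finset.sum_range_sub' f (n-1)]
    simp only [hf]
    norm_num
    have hc1 : ((n - 1 : ℕ) : ℝ) = (n:ℝ) - 1 := by
      have h1 : 1 ≤ n := by omega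
      push_cast [h1]; ring
    rw [hc1]
    have e3 : ((n:ℝ) - 1 + 1) * θ = π := by rw [hθ]; field_simp; ring
    have e4 : ((n:ℝ) - 1) * θ = π - θ := by rw [hθ]; field_simp
    rw [e3, e4, Real.sin_pi, Real.sin_pi_sub]
    ring
  rw [div_lt_iff₀ hcθ, ← key]
  rw [Finset.sum_mul]
  apply Finset.sum_lt_sum
  · intro j hj
    have hs := hsin j hj
    apply mul_le_mul_of_nonneg_right _ (le_of_lt hcθ)
    rw [le_div_iff₀ hs]
    nlinarith [Real.sin_le_one (π * j / n)]
  · refine ⟨1, ?_, ?_⟩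
    · simp [Finset.mem_Icc]; omega
    · have h1 : π * (1:ℕ) / n = θ := by rw [hθ]; push_cast; ring
      rw [h1]
      apply mul_lt_mul_of_pos_right _ hcθ
      rw [lt_div_iff₀ hsθ]
      nlinarith
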